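/- Suppose 𝒦(Σ) ∩ int(𝒴) ≠ ∅. Then ⋃_{ℓ≥1} F^ℓ(0) = ⋃_{ℓ≥1} F^ℓ(𝒯*(Σ)), i.e., the reachable set R(F) equals the union of images of the strongly reachable subspace under iterates of F. -/
import Mathlib


open Pointwise

/-- `ℓ`-fold iterate of a set-valued map: `SIter F ℓ x = F^ℓ(x)`. -/
def SIter {E : Type*} (F : E → Set E) : ℕ → E → Set E
  | 0, x => {x}
  | n + 1, x => ⋃ y ∈ SIter F n x, F y

/-- `X(F)`: initial states of infinite solutions of `x_{k+1} ∈ F(x_k)`. -/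
def XSet {E : Type*} (F : E → Set E) : Set E :=
  {x | ∃ f : ℕ → E, f 0 = x ∧ ∀ k, f (k + 1) ∈ F (f k)}

/-- `R(F) = ⋃_{ℓ ≥ 1} F^ℓ(0)`. -/
def RSet {E : Type*} [Zero E] (F : E → Set E) : Set E :=
  ⋃ ℓ ∈ {ℓ : ℕ | 1 ≤ ℓ}, SIter F ℓ 0

/-- The set-valued map `F(x) = Ax + B D^{-1}(𝒴 − Cx)` of the constrained system `(Σ,𝒴)`. -/
def Fmap {n m s : ℕ} (A : Matrix (Fin n) (Fin n) ℝ) (B : Matrix (Fin n) (Fin m) ℝ)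
    (C : Matrix (Fin s) (Fin n) ℝ) (D : Matrix (Fin s) (Fin m) ℝ)
    (Y : Set (Fin s → ℝ)) : (Fin n → ℝ) → Set (Fin n → ℝ) :=
  fun x => {z | ∃ u : Fin m → ℝ, C.mulVec x + D.mulVec u ∈ Y ∧ z = A.mulVec x + B.mulVec u}

/-- The strongly reachable subspace `𝒯*(Σ)`: states reachable from `0` with the output
kept identically zero along the way. -/
def Tstar {n m s : ℕ} (A : Matrix (Fin n) (Fin n) ℝ) (B : Matrix (Fin n) (Fin m) ℝ)
    (C : Matrix (Fin s) (Fin n) ℝ) (D : Matrix (Fin s) (Fin m) ℝ) : Set (Fin n → ℝ) :=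
  RSet (Fmap A B C D ({0} : Set (Fin s → ℝ)))

/-- The weakly unobservable subspace `𝒱*(Σ)`: initial states for which an input exists
making the output identically zero. -/
def Vstar {n m s : ℕ} (A : Matrix (Fin n) (Fin n) ℝ) (B : Matrix (Fin n) (Fin m) ℝ)
    (C : Matrix (Fin s) (Fin n) ℝ) (D : Matrix (Fin s) (Fin m) ℝ) : Set (Fin n → ℝ) :=
  XSet (Fmap A B C D ({0} : Set (Fin s → ℝ)))

/-- `𝒦(Σ) = im D + C 𝒯*(Σ)`. -/
def Kset {n m s : ℕ} (A : Matrix (Fin n) (Fin n) ℝ) (B : Matrix (Fin n) (Fin m) ℝ)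
    (C : Matrix (Fin s) (Fin n) ℝ) (D : Matrix (Fin s) (Fin m) ℝ) : Set (Fin s → ℝ) :=
  {y | ∃ (u : Fin m → ℝ) (t : Fin n → ℝ), t ∈ Tstar A B C D ∧ y = D.mulVec u + C.mulVec t}

/-- The image `im [C D]`. -/
def CDrange {n m s : ℕ} (C : Matrix (Fin s) (Fin n) ℝ) (D : Matrix (Fin s) (Fin m) ℝ) :
    Set (Fin s → ℝ) :=
  Set.range (fun p : (Fin n → ℝ) × (Fin m → ℝ) => C.mulVec p.1 + D.mulVec p.2)


lemma SIter_mono {E : Type*} {F G : E → Set E} (h : ∀ x, F x ⊆ G x) :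
    ∀ k x, SIter F k x ⊆ SIter G k x := by
  intro k
  induction k with
  | zero => intro x; simp [SIter]
  | succ n ih =>
    intro x z hz
    simp only [SIter, Set.mem_iUnion] at hz ⊢
    obtain ⟨y, hy, hzy⟩ := hz
    exact ⟨y, ih x hy, h y hzy⟩

lemma SIter_comp {E : Type*} {F : E → Set E} :
    ∀ (ℓ k : ℕ) (x₀ x z : E), x ∈ SIter F k x₀ → z ∈ SIter F ℓ x →
      z ∈ SIter F (k + ℓ) x₀ := by
  intro ℓ
  induction ℓ with
  | zero =>
    intro k x₀ x z hx hz
    simp only [SIter, Set.mem_singleton_iff] at hz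
    simpa [hz] using hx
  | succ n ih =>
    intro k x₀ x z hx hz
    simp only [SIter, Set.mem_iUnion] at hz
    obtain ⟨y, hy, hzy⟩ := hz
    have := ih k x₀ x y hx hy
    show z ∈ SIter F (k + n + 1) x₀
    simp only [SIter, Set.mem_iUnion]
    exact ⟨y, this, hzy⟩

/-- If `𝒦(Σ) ∩ int 𝒴 ≠ ∅`, then `R(F) = ⋃_{ℓ≥1} F^ℓ(𝒯*(Σ))`. -/
theorem stmt18 {n m s : ℕ} (A : Matrix (Fin n) (Fin n) ℝ) (B : Matrix (Fin n) (Fin m) ℝ)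
    (C : Matrix (Fin s) (Fin n) ℝ) (D : Matrix (Fin s) (Fin m) ℝ)
    (Y : Set (Fin s → ℝ)) (hY : Convex ℝ Y) (h0Y : (0 : Fin s → ℝ) ∈ Y)
    (hsolid : (interior (Y ∩ CDrange C D)).Nonempty)
    (hint : (Kset A B C D ∩ interior Y).Nonempty) :
    RSet (Fmap A B C D Y) =
      ⋃ ℓ ∈ {ℓ : ℕ | 1 ≤ ℓ}, ⋃ x ∈ Tstar A B C D, SIter (Fmap A B C D Y) ℓ x := by
  have hsub : ∀ x, Fmap A B C D ({0} : Set (Fin s → ℝ)) x ⊆ Fmap A B C D Y x := by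
    intro x z hz
    obtain ⟨u, hu, rfl⟩ := hz
    exact ⟨u, by simpa using (hu ▸ h0Y : _), rfl⟩
  have h0T : (0 : Fin n → ℝ) ∈ Tstar A B C D := by
    refine Set.mem_biUnion (show 1 ∈ {ℓ : ℕ | 1 ≤ ℓ} by simp) ?_
    simp only [SIter, Set.mem_iUnion]
    exact ⟨0, rfl, ⟨0, by simp [Matrix.mulVec_zero], by simp [Matrix.mulVec_zero]⟩⟩
  apply Set.Subset.antisymm
  · intro z hz
    obtain ⟨ℓ, hℓ, hzℓ⟩ := Set.mem_iUnion₂.1 hz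
    exact Set.mem_iUnion₂.2 ⟨ℓ, hℓ, Set.mem_iUnion₂.2 ⟨0, h0T, hzℓ⟩⟩
  · intro z hz
    obtain ⟨ℓ, hℓ, hz2⟩ := Set.mem_iUnion₂.1 hz
    obtain ⟨x, hxT, hzx⟩ := Set.mem_iUnion₂.1 hz2
    obtain ⟨k, hk, hxk⟩ := Set.mem_iUnion₂.1 hxT
    have hxk' : x ∈ SIter (Fmap A B C D Y) k 0 := SIter_mono hsub k 0 hxk
    refine Set.mem_iUnion₂.2 ⟨k + ℓ, le_trans hk (Nat.le_add_right k ℓ), ?_⟩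
    exact SIter_comp ℓ k 0 x z hxk' hzx
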